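/- Let Ĉ^1(X),...,Ĉ^B(X) be B prediction sets each satisfying the marginal miscoverage bound P(Y ∉ Ĉ^b(X)) ≤ αγ for some α ∈ (0,1) and γ ∈ (0,1). Define the aggregated set Ĉ_{B,γ}(x) = { y : (1/B) Σ_{b=1}^B 1[y ∈ Ĉ^b(x)] > 1 - γ }. Then P(Y ∉ Ĉ_{B,γ}(X)) ≤ α. -/

import Mathlib

open MeasureTheory
open scoped Classical ENNReal

/-- Aggregation of prediction sets: if each of `B` prediction sets miscovers with probability
at most `α * γ`, then the aggregated set
`Ĉ_{B,γ}(x) = {y : (1/B) ∑_b 1[y ∈ Ĉ^b(x)] > 1 - γ}` miscovers with probability at most `α`. -/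
theorem stmt_5 {Ω α β : Type*} [MeasurableSpace Ω] (μ : Measure Ω) [IsProbabilityMeasure μ]
    (X : Ω → α) (Y : Ω → β) (B : ℕ) (hB : 0 < B) (C : Fin B → α → Set β)
    (a g : ℝ) (ha : a ∈ Set.Ioo (0 : ℝ) 1) (hg : g ∈ Set.Ioo (0 : ℝ) 1)
    (hcov : ∀ b : Fin B, μ {ω | Y ω ∉ C b (X ω)} ≤ ENNReal.ofReal (a * g)) :
    μ {ω | ¬ (1 - g < ((Finset.univ.filter fun b : Fin B => Y ω ∈ C b (X ω)).card : ℝ) / B)}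
      ≤ ENNReal.ofReal a := by
  obtain ⟨ha0, ha1⟩ := ha
  obtain ⟨hg0, hg1⟩ := hg
  set A : Fin B → Set Ω := fun b => {ω | Y ω ∉ C b (X ω)} with hA
  set H : Fin B → Set Ω := fun b => toMeasurable μ (A b) with hH
  set f : Ω → ℝ≥0∞ := fun ω => ∑ b : Fin B, (H b).indicator 1 ω with hf
  have hfm : Measurable f := by
    apply Finset.measurable_sum
    intro b _
    exact (measurable_const.indicator (measurableSet_toMeasurable μ (A b)))
  have hgB : (0:ℝ) < g * B := mul_pos hg0 (by exact_mod_cast hB)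
  -- the target set is contained in {ω | ofReal (g*B) ≤ f ω}
  have hsub : {ω | ¬ (1 - g < ((Finset.univ.filter fun b : Fin B => Y ω ∈ C b (X ω)).card : ℝ) / B)}
      ⊆ {ω | ENNReal.ofReal (g * B) ≤ f ω} := by
    intro ω hω
    simp only [Set.mem_setOf_eq, not_lt] at hω
    set m := (Finset.univ.filter fun b : Fin B => Y ω ∈ C b (X ω)).card with hm
    have hmB : m ≤ B := by
      have := Finset.card_filter_le (Finset.univ : Finset (Fin B))
        (fun b => Y ω ∈ C b (X ω))
      simpa using this
    have hcount : (Finset.univ.filter fun b : Fin B => ω ∈ A b).card = B - m := by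
      have h := Finset.card_filter_add_card_filter_not (s := (Finset.univ : Finset (Fin B)))
        (p := fun b : Fin B => Y ω ∈ C b (X ω))
      simp only [Finset.card_univ, Fintype.card_fin] at h
      have : (Finset.univ.filter fun b : Fin B => ω ∈ A b).card
          = (Finset.univ.filter fun b : Fin B => ¬ (Y ω ∈ C b (X ω))).card := rfl
      omega
    have hfA : ((B - m : ℕ) : ℝ≥0∞) ≤ f ω := by
      have h1 : (fun ω' => ∑ b : Fin B, (A b).indicator (1 : Ω → ℝ≥0∞) ω') ω ≤ f ω := by
        apply Finset.sum_le_sum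
        intro b _
        exact Set.indicator_le_indicator_of_subset (subset_toMeasurable μ (A b))
          (fun _ => zero_le) ω
      have h2 : ∑ b : Fin B, (A b).indicator (1 : Ω → ℝ≥0∞) ω
          = ((Finset.univ.filter fun b : Fin B => ω ∈ A b).card : ℝ≥0∞) := by
        simp only [Set.indicator_apply, Pi.one_apply]
        rw [Finset.sum_boole]
      rw [hcount] at h2
      calc ((B - m : ℕ) : ℝ≥0∞) = ∑ b : Fin B, (A b).indicator (1 : Ω → ℝ≥0∞) ω := h2.symm
        _ ≤ f ω := h1
    refine le_trans ?_ hfA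
    rw [← ENNReal.ofReal_natCast]
    apply ENNReal.ofReal_le_ofReal
    -- g * B ≤ B - m in ℝ
    have hB' : (0:ℝ) < B := by exact_mod_cast hB
    have h3 : (m : ℝ) ≤ (1 - g) * B := by
      have := (div_le_iff₀ hB').mp hω
      linarith
    have h4 : ((B - m : ℕ) : ℝ) = (B : ℝ) - m := by
      push_cast [Nat.cast_sub hmB]; ring
    rw [h4]; nlinarith
  -- Markov's inequality
  have hmarkov : ENNReal.ofReal (g * B) * μ {ω | ENNReal.ofReal (g * B) ≤ f ω}
      ≤ ∫⁻ ω, f ω ∂μ := mul_meas_ge_le_lintegral₀ hfm.aemeasurable _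
  have hint : ∫⁻ ω, f ω ∂μ ≤ ENNReal.ofReal (g * B) * ENNReal.ofReal a := by
    have : ∫⁻ ω, f ω ∂μ = ∑ b : Fin B, μ (H b) := by
      rw [hf, lintegral_finset_sum]
      · congr 1; ext b
        exact lintegral_indicator_one (measurableSet_toMeasurable μ (A b))
      · intro b _
        exact measurable_const.indicator (measurableSet_toMeasurable μ (A b))
    rw [this]
    have hHb : ∀ b, μ (H b) ≤ ENNReal.ofReal (a * g) := by
      intro b
      rw [hH]
      simpa [measure_toMeasurable] using hcov b
    calc ∑ b : Fin B, μ (H b) ≤ ∑ _b : Fin B, ENNReal.ofReal (a * g) :=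
          Finset.sum_le_sum fun b _ => hHb b
      _ = (B : ℝ≥0∞) * ENNReal.ofReal (a * g) := by
          rw [Finset.sum_const]; simp [Finset.card_univ, mul_comm]
      _ = ENNReal.ofReal (g * B) * ENNReal.ofReal a := by
          rw [← ENNReal.ofReal_natCast, ← ENNReal.ofReal_mul (by positivity),
            ← ENNReal.ofReal_mul (le_of_lt hgB)]
          ring_nf
  have hT : μ {ω | ENNReal.ofReal (g * B) ≤ f ω} ≤ ENNReal.ofReal a := by
    have h := le_trans hmarkov hint
    have hne : ENNReal.ofReal (g * B) ≠ 0 := by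
      simp [ENNReal.ofReal_eq_zero, not_le, hgB]
    have htop : ENNReal.ofReal (g * B) ≠ ⊤ := ENNReal.ofReal_ne_top
    exact ENNReal.le_of_forall_pos_le_add fun ε hε _ => by
      have := (ENNReal.mul_le_mul_iff_right hne htop).mp h
      exact le_trans this (le_add_of_nonneg_right zero_le)
  exact le_trans (measure_mono hsub) hT
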